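/- Let H_code = H_a ⊗ H_{ā} and H = H_A ⊗ H_{Ā} with a family of orthonormal vectors |ĩj⟩ ∈ H indexed by i ∈ {1,…,|a|}, j ∈ {1,…,|ā|}. Suppose there exist a unitary U on H acting as U_A ⊗ U_{Ā}, decompositions H_A ⊇ H_{A₁} ⊗ H_{A₂} and H_{Ā} ⊇ H_{Ā₁} ⊗ H_{Ā₂} with |A₁| = |a|, |Ā₁| = |ā|, and a unit vector |χ⟩ ∈ H_{A₂} ⊗ H_{Ā₂}, such that |ĩj⟩ = U(|i⟩_{A₁} |j⟩_{Ā₁} |χ⟩). Then for any probability distribution p_{ij} and ρ̃ = Σ_{ij} p_{ij} |ĩj⟩⟨ĩj|, the reduced states satisfy S(ρ̃_A) = S(χ_{A₂}) + S(ρ̃_a), where ρ̃_A = Tr_{Ā}(ρ̃), ρ̃_a = Σ_i p_i |i⟩⟨i| with p_i = Σ_j p_{ij}, and χ_{A₂} = Tr_{Ā₂}|χ⟩⟨χ|. -/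

import Mathlib

open scoped BigOperators ComplexOrder Kronecker
open Matrix

variable {A₁ A₂ Ab₁ Ab₂ A Ab : Type*}
  [Fintype A₁] [DecidableEq A₁] [Fintype A₂] [DecidableEq A₂]
  [Fintype Ab₁] [DecidableEq Ab₁] [Fintype Ab₂] [DecidableEq Ab₂]
  [Fintype A] [DecidableEq A] [Fintype Ab] [DecidableEq Ab]

/-- Von Neumann entropy of a Hermitian matrix (junk value `0` otherwise). -/
noncomputable def vnEntropy {n : Type*} [Fintype n] [DecidableEq n]
    (M : Matrix n n ℂ) : ℝ :=
  if h : M.IsHermitian then ∑ i, Real.negMulLog (h.eigenvalues i) else 0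

/-- Outer product `|ψ⟩⟨ψ|`. -/
noncomputable def outer {n : Type*} (ψ : n → ℂ) : Matrix n n ℂ :=
  fun p q => ψ p * star (ψ q)

/-- The product vector `|i⟩_{A₁} |j⟩_{Ā₁} |χ⟩_{A₂Ā₂}`. -/
noncomputable def prodVec (χ : A₂ × Ab₂ → ℂ) (i : A₁) (j : Ab₁) :
    (A₁ × A₂) × (Ab₁ × Ab₂) → ℂ :=
  fun q => (if q.1.1 = i then 1 else 0) * (if q.2.1 = j then 1 else 0) * χ (q.1.2, q.2.2)

set_option linter.unusedSectionVars false

section Aux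

open Polynomial

lemma eval_charpoly' {n : Type*} [Fintype n] [DecidableEq n] (N : Matrix n n ℂ) (r : ℂ) :
    N.charpoly.eval r = (r • (1 : Matrix n n ℂ) - N).det := by
  rw [Matrix.charpoly, eval_det, matPolyEquiv_charmatrix]
  congr 1
  rw [eval_sub, eval_X, eval_C]
  congr 1
  simp [Matrix.scalar, smul_one_eq_diagonal]

lemma det_smul_one_sub {k : Type*} [Fintype k] [DecidableEq k] (x : ℂ) (hx : x ≠ 0)
    (P : Matrix k k ℂ) :
    (x • (1 : Matrix k k ℂ) - P).det = x ^ Fintype.card k * ((1 : Matrix k k ℂ) - x⁻¹ • P).det := by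
  rw [← Matrix.det_smul]
  congr 1
  rw [smul_sub, smul_smul, mul_inv_cancel₀ hx, one_smul]

lemma det_conj_isometry {m n : Type*} [Fintype m] [DecidableEq m] [Fintype n] [DecidableEq n]
    (V : Matrix n m ℂ) (B : Matrix m n ℂ) (hBV : B * V = 1) (M : Matrix m m ℂ)
    (x : ℂ) (hx : x ≠ 0) :
    (x • (1 : Matrix n n ℂ) - V * M * B).det
      = x ^ (Fintype.card n - Fintype.card m) * (x • (1 : Matrix m m ℂ) - M).det := by
  have hmn : Fintype.card m ≤ Fintype.card n := by
    calc Fintype.card m = (1 : Matrix m m ℂ).rank := Matrix.rank_one.symm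
    _ = (B * V).rank := by rw [hBV]
    _ ≤ B.rank ⊓ V.rank := Matrix.rank_mul_le B V
    _ ≤ B.rank := inf_le_left
    _ ≤ Fintype.card n := Matrix.rank_le_card_width B
  have hmid : ((1 : Matrix n n ℂ) - x⁻¹ • (V * M * B)).det
      = ((1 : Matrix m m ℂ) - x⁻¹ • M).det := by
    have e1 : (1 : Matrix n n ℂ) - x⁻¹ • (V * M * B)
        = 1 + ((-x⁻¹) • (V * M)) * B := by
      rw [neg_smul, Matrix.neg_mul, Matrix.smul_mul, Matrix.mul_assoc]
      abel
    have e2 : (1 : Matrix m m ℂ) + B * ((-x⁻¹) • (V * M)) = 1 - x⁻¹ • M := by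
      rw [Matrix.mul_smul, neg_smul, ← Matrix.mul_assoc, hBV, Matrix.one_mul]
      abel
    rw [e1, Matrix.det_one_add_mul_comm, e2]
  rw [det_smul_one_sub x hx, det_smul_one_sub x hx, hmid, ← mul_assoc]
  congr 1
  rw [← pow_add, Nat.sub_add_cancel hmn]

lemma charpoly_conj_isometry {m n : Type*} [Fintype m] [DecidableEq m] [Fintype n]
    [DecidableEq n] (V : Matrix n m ℂ) (B : Matrix m n ℂ) (hBV : B * V = 1)
    (M : Matrix m m ℂ) :
    (V * M * B).charpoly = X ^ (Fintype.card n - Fintype.card m) * M.charpoly := by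
  apply Polynomial.eq_of_infinite_eval_eq
  apply Set.Infinite.mono (s := {(0 : ℂ)}ᶜ)
  · intro x hx
    simp only [Set.mem_compl_iff, Set.mem_singleton_iff] at hx
    simp only [Set.mem_setOf_eq, eval_mul, eval_pow, eval_X, eval_charpoly']
    exact det_conj_isometry V B hBV M x hx
  · exact Set.Finite.infinite_compl (Set.finite_singleton 0)

lemma charpoly_diagonal' {n : Type*} [Fintype n] [DecidableEq n] (d : n → ℂ) :
    (Matrix.diagonal d).charpoly = ∏ i, (X - C (d i)) := by
  have h : charmatrix (Matrix.diagonal d) = Matrix.diagonal (fun i => X - C (d i)) := by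
    ext i j
    by_cases hij : i = j
    · subst hij; simp [charmatrix_apply]
    · simp [charmatrix_apply_ne _ _ _ hij, Matrix.diagonal_apply_ne _ hij,
        Matrix.diagonal_apply_ne' _ fun h => hij h.symm]
  rw [Matrix.charpoly, h, Matrix.det_diagonal]

lemma hermitian_charpoly_prod {n : Type*} [Fintype n] [DecidableEq n]
    {N : Matrix n n ℂ} (hN : N.IsHermitian) :
    N.charpoly = ∏ i, (X - C ((hN.eigenvalues i : ℂ))) := by
  have hU : (star (hN.eigenvectorUnitary : Matrix n n ℂ)) * (hN.eigenvectorUnitary : Matrix n n ℂ) = 1 :=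
    hN.eigenvectorUnitary.2.1
  conv_lhs => rw [hN.spectral_theorem, Unitary.conjStarAlgAut_apply]
  rw [charpoly_conj_isometry _ _ hU, Nat.sub_self, pow_zero, one_mul, charpoly_diagonal']
  rfl

lemma sum_eigenvalues_eq_trace' {n : Type*} [Fintype n] [DecidableEq n]
    {N : Matrix n n ℂ} (hN : N.IsHermitian) :
    (∑ i, ((hN.eigenvalues i : ℂ))) = N.trace := by
  have hU : (star (hN.eigenvectorUnitary : Matrix n n ℂ)) * (hN.eigenvectorUnitary : Matrix n n ℂ) = 1 :=
    hN.eigenvectorUnitary.2.1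
  conv_rhs => rw [hN.spectral_theorem, Unitary.conjStarAlgAut_apply]
  rw [Matrix.trace_mul_cycle, hU, Matrix.one_mul, Matrix.trace_diagonal]
  rfl

lemma roots_prod_X_sub_C' {m : Type*} [Fintype m] (c : m → ℂ) :
    (∏ i, (X - C (c i))).roots = Finset.univ.val.map c := by
  have : (∏ i, (X - C (c i))) = (Multiset.map (fun a => X - C a) (Finset.univ.val.map c)).prod := by
    rw [Multiset.map_map]
    rfl
  rw [this, roots_multiset_prod_X_sub_C]

lemma key_sum {n m : Type*} [Fintype n] [DecidableEq n] [Fintype m]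
    {N : Matrix n n ℂ} (hN : N.IsHermitian) (g : m → ℝ)
    (h : N.charpoly
      = X ^ (Fintype.card n - Fintype.card m) * ∏ i, (X - C ((g i : ℝ) : ℂ)))
    (f : ℝ → ℝ) (hf : f 0 = 0) :
    ∑ i, f (hN.eigenvalues i) = ∑ i, f (g i) := by
  have h1 : N.charpoly.roots = Finset.univ.val.map (fun i => ((hN.eigenvalues i : ℂ))) := by
    rw [hermitian_charpoly_prod hN, roots_prod_X_sub_C']
  have h2 : N.charpoly.roots
      = Multiset.replicate (Fintype.card n - Fintype.card m) 0
        + Finset.univ.val.map (fun i => ((g i : ℝ) : ℂ)) := by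
    rw [h, roots_mul, roots_pow, roots_X, roots_prod_X_sub_C']
    · congr 1
      rw [Multiset.nsmul_singleton]
    · refine Polynomial.Monic.ne_zero ?_
      exact (monic_X_pow _).mul (monic_prod_of_monic _ _ fun i _ => monic_X_sub_C _)
  have h3 := h1.symm.trans h2
  have h4 := congrArg (fun s : Multiset ℂ => ((s.map (fun z => f z.re)).sum)) h3
  simp only [Multiset.map_map, Function.comp, Multiset.map_add, Multiset.sum_add,
    Multiset.map_replicate, Complex.ofReal_re, Complex.zero_re, hf,
    Multiset.sum_replicate, smul_zero, zero_add] at h4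
  rw [Finset.sum, Finset.sum]
  exact h4

lemma code_apply (V : Matrix A (A₁ × A₂) ℂ) (W : Matrix Ab (Ab₁ × Ab₂) ℂ)
    (χ : A₂ × Ab₂ → ℂ) (i : A₁) (j : Ab₁) (a : A) (b : Ab) :
    ((V ⊗ₖ W) *ᵥ prodVec χ i j) (a, b)
      = ∑ x2 : A₂, ∑ y2 : Ab₂, V a (i, x2) * W b (j, y2) * χ (x2, y2) := by
  simp only [mulVec, dotProduct, Fintype.sum_prod_type, kroneckerMap_apply, prodVec]
  simp [mul_ite, ite_mul, mul_comm, mul_left_comm, mul_assoc]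

lemma isometry_contract {m n : Type*} [Fintype m] [Fintype n] [DecidableEq m]
    (W : Matrix n m ℂ) (hW : Wᴴ * W = 1) (f g : m → ℂ) :
    (∑ b : n, (W *ᵥ f) b * star ((W *ᵥ g) b)) = ∑ u : m, f u * star (g u) := by
  have h1 : (∑ b : n, (W *ᵥ f) b * star ((W *ᵥ g) b)) = (W *ᵥ f) ⬝ᵥ star (W *ᵥ g) := rfl
  rw [h1, star_mulVec, dotProduct_comm, dotProduct_mulVec, vecMul_vecMul, hW, vecMul_one]
  simp [dotProduct, mul_comm]

lemma step2 (V : Matrix A (A₁ × A₂) ℂ) (W : Matrix Ab (Ab₁ × Ab₂) ℂ)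
    (hW : Wᴴ * W = 1) (χ : A₂ × Ab₂ → ℂ) (i : A₁) (j : Ab₁) (a a' : A) :
    (∑ b : Ab, ((V ⊗ₖ W) *ᵥ prodVec χ i j) (a, b)
        * star (((V ⊗ₖ W) *ᵥ prodVec χ i j) (a', b)))
      = ∑ x2 : A₂, ∑ x2' : A₂, V a (i, x2) * star (V a' (i, x2'))
          * (∑ y2 : Ab₂, χ (x2, y2) * star (χ (x2', y2))) := by
  set ψ : A → Ab₂ → ℂ := fun c y2 => ∑ x2 : A₂, V c (i, x2) * χ (x2, y2) with hψ
  have hcode : ∀ c b, ((V ⊗ₖ W) *ᵥ prodVec χ i j) (c, b)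
      = (W *ᵥ fun q : Ab₁ × Ab₂ => if q.1 = j then ψ c q.2 else 0) b := by
    intro c b
    rw [code_apply]
    simp only [mulVec, dotProduct, Fintype.sum_prod_type, mul_ite, mul_zero,
      Finset.sum_ite_irrel, Finset.sum_const_zero, Finset.sum_ite_eq', Finset.mem_univ, if_true, hψ]
    rw [Finset.sum_comm]
    simp only [Finset.mul_sum]
    exact Finset.sum_congr rfl fun y _ => Finset.sum_congr rfl fun x _ => by ring
  simp only [hcode]
  rw [isometry_contract _ hW]
  simp only [Fintype.sum_prod_type, apply_ite (star : ℂ → ℂ), star_zero, ite_mul, mul_ite,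
    zero_mul, mul_zero]
  rw [Finset.sum_comm]
  simp only [Finset.sum_ite_eq', Finset.mem_univ, if_true]
  -- now: ∑ y2, ψ a y2 * star (ψ a' y2) = RHS
  simp only [hψ, star_sum, star_mul', Finset.sum_mul, Finset.mul_sum]
  refine Eq.trans (Finset.sum_congr rfl fun y2 _ => Finset.sum_comm) ?_
  rw [Finset.sum_comm]
  refine Finset.sum_congr rfl fun x2 _ => ?_
  rw [Finset.sum_comm]
  refine Finset.sum_congr rfl fun x2' _ => Finset.sum_congr rfl fun y2 _ => by ring

lemma stepA (V : Matrix A (A₁ × A₂) ℂ) (W : Matrix Ab (Ab₁ × Ab₂) ℂ)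
    (hW : Wᴴ * W = 1) (χ : A₂ × Ab₂ → ℂ) (p : A₁ → Ab₁ → ℝ) :
    (fun a a' => ∑ b : Ab,
        (∑ i, ∑ j, (p i j : ℂ) • outer ((V ⊗ₖ W) *ᵥ prodVec χ i j)) (a, b) (a', b))
      = V * ((Matrix.diagonal fun i => ((∑ j, p i j : ℝ) : ℂ)) ⊗ₖ
          (Matrix.of fun x y => ∑ b : Ab₂, outer χ (x, b) (y, b))) * Vᴴ := by
  funext a a'
  have lhs1 : (∑ b : Ab,
      (∑ i, ∑ j, (p i j : ℂ) • outer ((V ⊗ₖ W) *ᵥ prodVec χ i j)) (a, b) (a', b))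
      = ∑ i, ∑ j, (p i j : ℂ) *
          ∑ b : Ab, ((V ⊗ₖ W) *ᵥ prodVec χ i j) (a, b)
            * star (((V ⊗ₖ W) *ᵥ prodVec χ i j) (a', b)) := by
    simp only [Matrix.sum_apply, Matrix.smul_apply, smul_eq_mul, outer, Finset.mul_sum]
    rw [Finset.sum_comm]
    exact Finset.sum_congr rfl fun i _ => Finset.sum_comm
  rw [lhs1]
  simp only [step2 V W hW χ]
  -- RHS
  simp only [Matrix.mul_apply, conjTranspose_apply, kroneckerMap_apply, diagonal_apply,
    Matrix.of_apply, Fintype.sum_prod_type, ite_mul, zero_mul, mul_ite, mul_zero,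
    Finset.sum_ite_irrel, Finset.sum_const_zero, Finset.sum_ite_eq', Finset.sum_ite_eq,
    Finset.mem_univ, if_true, outer]
  refine Finset.sum_congr rfl fun i _ => ?_
  simp only [Complex.ofReal_sum, Finset.mul_sum, Finset.sum_mul]
  refine Eq.trans (Finset.sum_congr rfl fun j _ => Finset.sum_comm) ?_
  rw [Finset.sum_comm]
  refine Finset.sum_congr rfl fun s _ => ?_
  rw [Finset.sum_comm]
  refine Finset.sum_congr rfl fun u _ => ?_
  rw [Finset.sum_comm]
  refine Finset.sum_congr rfl fun y _ => Finset.sum_congr rfl fun j _ => by ring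

end Aux

open Polynomial in
/-- Entropy formula `S(ρ̃_A) = S(χ_{A₂}) + S(ρ̃_a)` for encoded states of the
form `|ĩj⟩ = (U_A ⊗ U_Ā)(|i⟩_{A₁}|j⟩_{Ā₁}|χ⟩_{A₂Ā₂})`, where
`H_{A₁} ⊗ H_{A₂}` embeds isometrically in `H_A` via `W_A` (and likewise for `Ā`). -/
theorem entropy_of_encoded_state
    (WA : Matrix A (A₁ × A₂) ℂ) (hWA : WAᴴ * WA = 1)
    (WAb : Matrix Ab (Ab₁ × Ab₂) ℂ) (hWAb : WAbᴴ * WAb = 1)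
    (UA : Matrix A A ℂ) (hUA : UA ∈ Matrix.unitaryGroup A ℂ)
    (UAb : Matrix Ab Ab ℂ) (hUAb : UAb ∈ Matrix.unitaryGroup Ab ℂ)
    (χ : A₂ × Ab₂ → ℂ) (hχ : ∑ q, ‖χ q‖ ^ 2 = 1)
    (p : A₁ → Ab₁ → ℝ) (hp : ∀ i j, 0 ≤ p i j) (hp1 : ∑ i, ∑ j, p i j = 1)
    -- the encoded states
    (code : A₁ → Ab₁ → (A × Ab → ℂ))
    (hcode : ∀ i j, code i j = ((UA * WA) ⊗ₖ (UAb * WAb)) *ᵥ prodVec χ i j)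
    -- `ρ̃` and its reduced matrices
    (ρ : Matrix (A × Ab) (A × Ab) ℂ)
    (hρ : ρ = ∑ i, ∑ j, (p i j : ℂ) • outer (code i j))
    (ρA : Matrix A A ℂ) (hρA : ρA = fun a a' => ∑ b : Ab, ρ (a, b) (a', b))
    (ρa : Matrix A₁ A₁ ℂ) (hρa : ρa = Matrix.diagonal fun i => ((∑ j, p i j : ℝ) : ℂ))
    (χA₂ : Matrix A₂ A₂ ℂ)
    (hχA₂ : χA₂ = fun x y => ∑ b : Ab₂, outer χ (x, b) (y, b)) :
    vnEntropy ρA = vnEntropy χA₂ + vnEntropy ρa := by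
  -- isometries
  set V : Matrix A (A₁ × A₂) ℂ := UA * WA with hVdef
  set W : Matrix Ab (Ab₁ × Ab₂) ℂ := UAb * WAb with hWdef
  have hV : Vᴴ * V = 1 := by
    rw [hVdef, conjTranspose_mul, Matrix.mul_assoc, ← Matrix.mul_assoc UAᴴ,
      ← Matrix.star_eq_conjTranspose UA, hUA.1, Matrix.one_mul, hWA]
  have hW : Wᴴ * W = 1 := by
    rw [hWdef, conjTranspose_mul, Matrix.mul_assoc, ← Matrix.mul_assoc UAbᴴ,
      ← Matrix.star_eq_conjTranspose UAb, hUAb.1, Matrix.one_mul, hWAb]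
  -- the reduced state on A
  have hred : ρA = V * (ρa ⊗ₖ χA₂) * Vᴴ := by
    rw [hρA, hρ]
    simp only [hcode]
    rw [hρa, hχA₂]
    exact stepA V W hW χ p
  -- Hermitian structure of χA₂
  have hH2 : χA₂.IsHermitian := by
    rw [hχA₂]
    ext x y
    change star (∑ b : Ab₂, outer χ (y, b) (x, b)) = ∑ b : Ab₂, outer χ (x, b) (y, b)
    simp only [conjTranspose_apply, outer, star_sum, star_mul', star_star]
    exact Finset.sum_congr rfl fun b _ => mul_comm (G := ℂ) _ _
  set μ : A₂ → ℝ := hH2.eigenvalues with hμdef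
  set Q : Matrix A₂ A₂ ℂ := (hH2.eigenvectorUnitary : Matrix A₂ A₂ ℂ) with hQdef
  have hQspec : χA₂ = Q * Matrix.diagonal (fun x => ((μ x : ℝ) : ℂ)) * star Q := by
    conv_lhs => rw [hH2.spectral_theorem]
    rfl
  have hQ1 : star Q * Q = 1 := hH2.eigenvectorUnitary.2.1
  -- Hermitian structure of ρa
  have hH1 : ρa.IsHermitian := by
    rw [hρa]
    ext i i'
    by_cases h : i' = i
    · subst h; simp
    · simp [Matrix.conjTranspose_apply, Matrix.diagonal_apply_ne _ h,
        Matrix.diagonal_apply_ne _ (fun hh => h hh.symm)]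
  -- Hermitian structure of ρA
  have hHmid : (ρa ⊗ₖ χA₂).IsHermitian := by
    ext u u'
    simp only [conjTranspose_apply, kroneckerMap_apply, star_mul']
    rw [← conjTranspose_apply ρa, ← conjTranspose_apply χA₂, hH1.eq, hH2.eq]
  clear_value V W
  have hHρA : ρA.IsHermitian := by
    rw [hred]
    show _ᴴ = _
    rw [conjTranspose_mul, conjTranspose_mul, conjTranspose_conjTranspose, hHmid.eq,
      ← Matrix.mul_assoc]
  -- diagonalisation of the middle block
  set pS : A₁ → ℝ := fun i => ∑ j, p i j with hpSdef
  have hmid : ρa ⊗ₖ χA₂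
      = ((1 : Matrix A₁ A₁ ℂ) ⊗ₖ Q)
        * Matrix.diagonal (fun u : A₁ × A₂ => ((pS u.1 : ℝ) : ℂ) * ((μ u.2 : ℝ) : ℂ))
        * ((1 : Matrix A₁ A₁ ℂ) ⊗ₖ star Q) := by
    have h1 : ρa ⊗ₖ χA₂ = ((1 : Matrix A₁ A₁ ℂ) * ρa * 1) ⊗ₖ (Q * Matrix.diagonal
        (fun x => ((μ x : ℝ) : ℂ)) * star Q) := by
      rw [Matrix.one_mul, Matrix.mul_one, ← hQspec]
    rw [h1, Matrix.mul_kronecker_mul, Matrix.mul_kronecker_mul, hρa,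
      Matrix.diagonal_kronecker_diagonal]
  -- the charpoly of ρA
  have hBV : (((1 : Matrix A₁ A₁ ℂ) ⊗ₖ star Q) * Vᴴ) * (V * ((1 : Matrix A₁ A₁ ℂ) ⊗ₖ Q))
      = 1 := by
    rw [Matrix.mul_assoc, ← Matrix.mul_assoc Vᴴ, hV, Matrix.one_mul,
      ← Matrix.mul_kronecker_mul, Matrix.one_mul, hQ1, Matrix.one_kronecker_one]
  have hcharρA : ρA.charpoly
      = X ^ (Fintype.card A - Fintype.card (A₁ × A₂))
        * ∏ u : A₁ × A₂, (X - C (((pS u.1 * μ u.2 : ℝ) : ℂ))) := by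
    have : ρA = (V * ((1 : Matrix A₁ A₁ ℂ) ⊗ₖ Q))
        * Matrix.diagonal (fun u : A₁ × A₂ => ((pS u.1 : ℝ) : ℂ) * ((μ u.2 : ℝ) : ℂ))
        * (((1 : Matrix A₁ A₁ ℂ) ⊗ₖ star Q) * Vᴴ) := by
      rw [hred, hmid]
      simp only [Matrix.mul_assoc]
    rw [this, charpoly_conj_isometry _ _ hBV, charpoly_diagonal']
    simp only [← Complex.ofReal_mul]
  -- the charpoly of ρa
  have hcharρa : ρa.charpoly
      = X ^ (Fintype.card A₁ - Fintype.card A₁) * ∏ i : A₁, (X - C (((pS i : ℝ) : ℂ))) := by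
    rw [Nat.sub_self, pow_zero, one_mul, hρa, charpoly_diagonal']
  -- entropies via key_sum
  have e1 : ∑ i, Real.negMulLog (hHρA.eigenvalues i)
      = ∑ u : A₁ × A₂, Real.negMulLog (pS u.1 * μ u.2) :=
    key_sum hHρA (fun u : A₁ × A₂ => pS u.1 * μ u.2) hcharρA Real.negMulLog
      Real.negMulLog_zero
  have e2 : ∑ i, Real.negMulLog (hH1.eigenvalues i) = ∑ i, Real.negMulLog (pS i) :=
    key_sum hH1 pS hcharρa Real.negMulLog Real.negMulLog_zero
  -- trace of χA₂ is 1
  have htr : (∑ x, μ x) = 1 := by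
    have h1 : ((∑ x, μ x : ℝ) : ℂ) = χA₂.trace := by
      rw [← sum_eigenvalues_eq_trace' hH2]
      push_cast
      rfl

    have h2 : χA₂.trace = ((1 : ℝ) : ℂ) := by
      rw [hχA₂, ← hχ]
      simp only [Matrix.trace, Matrix.diag_apply, outer, Complex.ofReal_sum,
        Fintype.sum_prod_type]
      refine Finset.sum_congr rfl fun x _ => Finset.sum_congr rfl fun b _ => ?_
      rw [Complex.star_def, Complex.mul_conj, Complex.normSq_eq_norm_sq]
    exact Complex.ofReal_injective (h1.trans h2)
  -- final computation
  rw [vnEntropy, vnEntropy, vnEntropy, dif_pos hHρA, dif_pos hH2, dif_pos hH1, e1, e2]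
  have expand : ∑ u : A₁ × A₂, Real.negMulLog (pS u.1 * μ u.2)
      = (∑ i, pS i) * (∑ x, Real.negMulLog (μ x))
        + (∑ x, μ x) * (∑ i, Real.negMulLog (pS i)) := by
    rw [Fintype.sum_prod_type]
    have per : ∀ i : A₁, (∑ y : A₂, Real.negMulLog (pS i * μ y))
        = pS i * (∑ x, Real.negMulLog (μ x)) + (∑ x, μ x) * Real.negMulLog (pS i) := by
      intro i
      rw [Finset.mul_sum, Finset.sum_mul, ← Finset.sum_add_distrib]
      exact Finset.sum_congr rfl fun y _ => by rw [Real.negMulLog_mul]; ring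
    rw [Finset.sum_congr rfl fun i _ => per i, Finset.sum_add_distrib, ← Finset.sum_mul,
      ← Finset.mul_sum]
  rw [expand, hp1, htr, one_mul, one_mul]
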